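/- Let X be a topological space and (Xₙ)_{n∈ℕ} an increasing sequence of closed subsets of X with union X, each Xₙ having finitely many irreducible components. Assume that the poset, ordered by inclusion, of all irreducible components of all the Xₙ is directed (any two elements have a common upper bound). Then X admits an equivalent filtration by irreducible closed subsets: there is an increasing sequence (Cₖ)_{k∈ℕ} of irreducible closed subsets of X with union X such that every Xₙ is contained in some Cₖ and every Cₖ is contained in some Xₘ. (This is the implication (i) ⇒ (iii) of Lemma 2.2 of the paper, characterizing ind-irreducible ind-varieties.) -/

import Mathlib

/-- `C` is an irreducible component of the subspace `Y`: a maximal irreducible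
subset of `Y` (such a set is automatically closed in `Y`). -/
def IsIrreducibleComponentOf {X : Type*} [TopologicalSpace X] (C Y : Set X) : Prop :=
  Maximal (fun s => s ⊆ Y ∧ IsIrreducible s) C

/-- Every point of `Y` lies in an irreducible component of `Y`. -/
lemma exists_component_mem {X : Type*} [TopologicalSpace X] {Y : Set X} {x : X} (hx : x ∈ Y) :
    ∃ C, IsIrreducibleComponentOf C Y ∧ x ∈ C := by
  obtain ⟨m, hxm, hm⟩ :=
    zorn_subset_nonempty {s : Set X | s ⊆ Y ∧ IsIrreducible s}
      (fun c hcS hc hne => by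
        refine ⟨⋃₀ c, ⟨Set.sUnion_subset fun s hs => (hcS hs).1, ?_, ?_⟩,
          fun s hs => Set.subset_sUnion_of_mem hs⟩
        · obtain ⟨s, hs⟩ := hne
          obtain ⟨y, hy⟩ := (hcS hs).2.1
          exact ⟨y, s, hs, hy⟩
        · rintro u v hu hv ⟨y, hy, hyu⟩ ⟨z, hz, hzv⟩
          obtain ⟨p, hpc, hyp⟩ := Set.mem_sUnion.1 hy
          obtain ⟨q, hqc, hzq⟩ := Set.mem_sUnion.1 hz
          rcases hc.total hpc hqc with hpq | hqp
          · obtain ⟨w, hwp, hwuv⟩ := (hcS hqc).2.2 u v hu hv ⟨y, hpq hyp, hyu⟩ ⟨z, hzq, hzv⟩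
            exact ⟨w, Set.mem_sUnion_of_mem hwp hqc, hwuv⟩
          · obtain ⟨w, hwp, hwuv⟩ := (hcS hpc).2.2 u v hu hv ⟨y, hyp, hyu⟩ ⟨z, hqp hzq, hzv⟩
            exact ⟨w, Set.mem_sUnion_of_mem hwp hpc, hwuv⟩)
      {x} ⟨Set.singleton_subset_iff.2 hx, isIrreducible_singleton⟩
  exact ⟨m, hm, hxm rfl⟩

/-- An irreducible component of a closed set is closed. -/
lemma IsIrreducibleComponentOf.isClosed {X : Type*} [TopologicalSpace X] {C Y : Set X}
    (h : IsIrreducibleComponentOf C Y) (hY : IsClosed Y) : IsClosed C := by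
  have hsub : closure C ⊆ Y := hY.closure_subset_iff.2 h.prop.1
  have := h.le_of_ge ⟨hsub, h.prop.2.closure⟩ subset_closure
  exact closure_subset_iff_isClosed.mp this

theorem exists_irreducible_equivalent_filtration
    (X : Type*) [TopologicalSpace X] [Nonempty X]
    (F : ℕ → Set X) (hmono : Monotone F) (hclosed : ∀ n, IsClosed (F n))
    (hunion : (⋃ n, F n) = Set.univ)
    (hfin : ∀ n, {C | IsIrreducibleComponentOf C (F n)}.Finite)
    (hdir : ∀ C₁ C₂ : Set X,
      (∃ n, IsIrreducibleComponentOf C₁ (F n)) →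
      (∃ n, IsIrreducibleComponentOf C₂ (F n)) →
      ∃ C₃, (∃ n, IsIrreducibleComponentOf C₃ (F n)) ∧ C₁ ⊆ C₃ ∧ C₂ ⊆ C₃) :
    ∃ C : ℕ → Set X, Monotone C ∧
      (∀ k, IsClosed (C k) ∧ IsIrreducible (C k)) ∧
      (⋃ k, C k) = Set.univ ∧
      (∀ n, ∃ k, F n ⊆ C k) ∧ (∀ k, ∃ m, C k ⊆ F m) := by
  set T : Set (Set X) := {C | ∃ n, IsIrreducibleComponentOf C (F n)} with hT
  -- T is nonempty
  obtain ⟨x⟩ := ‹Nonempty X›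
  have hxU : x ∈ ⋃ n, F n := hunion ▸ Set.mem_univ x
  obtain ⟨n₀, hn₀⟩ := Set.mem_iUnion.1 hxU
  obtain ⟨C₀, hC₀, _⟩ := exists_component_mem hn₀
  have hTne : T.Nonempty := ⟨C₀, n₀, hC₀⟩
  -- any finite subset of T has an upper bound in T
  have hfinub : ∀ s : Set (Set X), s.Finite → s ⊆ T → ∃ D ∈ T, ∀ c ∈ s, c ⊆ D := by
    intro s hs
    refine Set.Finite.induction_on (motive := fun s _ => s ⊆ T → ∃ D ∈ T, ∀ c ∈ s, c ⊆ D) s hs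
      (fun _ => ⟨C₀, ⟨n₀, hC₀⟩, fun c hc => absurd hc (Set.notMem_empty c)⟩) ?_
    intro a t _ _ ih hsub
    obtain ⟨D, hD, hDub⟩ := ih fun c hc => hsub (Set.mem_insert_of_mem a hc)
    obtain ⟨E, hE, haE, hDE⟩ := hdir a D (hsub (Set.mem_insert a t)) hD
    exact ⟨E, hE, fun c hc => by
      rcases hc with rfl | hc
      · exact haE
      · exact (hDub c hc).trans hDE⟩
  -- each F n is contained in some element of T
  have hFsub : ∀ n, ∃ D ∈ T, F n ⊆ D := by
    intro n
    obtain ⟨D, hD, hDub⟩ := hfinub {C | IsIrreducibleComponentOf C (F n)} (hfin n)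
      (fun c hc => ⟨n, hc⟩)
    refine ⟨D, hD, fun y hy => ?_⟩
    obtain ⟨c, hc, hyc⟩ := exists_component_mem hy
    exact hDub c hc hyc
  choose D hDT hFD using hFsub
  -- recursive construction
  let step : ∀ k : ℕ, {s : Set X // s ∈ T} → {s : Set X // s ∈ T} := fun k prev =>
    ⟨(hdir (D (k + 1)) prev.1 (hDT (k + 1)) prev.2).choose,
     (hdir (D (k + 1)) prev.1 (hDT (k + 1)) prev.2).choose_spec.1⟩
  let Cf : ℕ → {s : Set X // s ∈ T} := fun k => Nat.rec ⟨D 0, hDT 0⟩ step k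
  have hsucc : ∀ k, Cf (k + 1) = step k (Cf k) := fun k => rfl
  have hstep1 : ∀ k, D (k + 1) ⊆ (Cf (k + 1)).1 := fun k => by
    rw [hsucc k]
    exact (hdir (D (k + 1)) (Cf k).1 (hDT (k + 1)) (Cf k).2).choose_spec.2.1
  have hstep2 : ∀ k, (Cf k).1 ⊆ (Cf (k + 1)).1 := fun k => by
    rw [hsucc k]
    exact (hdir (D (k + 1)) (Cf k).1 (hDT (k + 1)) (Cf k).2).choose_spec.2.2
  have hFC : ∀ k, F k ⊆ (Cf k).1 := by
    intro k
    cases k with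
    | zero => exact hFD 0
    | succ k => exact (hFD (k + 1)).trans (hstep1 k)
  refine ⟨fun k => (Cf k).1, monotone_nat_of_le_succ hstep2, ?_, ?_, ?_, ?_⟩
  · intro k
    obtain ⟨n, hn⟩ := (Cf k).2
    exact ⟨hn.isClosed (hclosed n), hn.prop.2⟩
  · apply Set.eq_univ_of_univ_subset
    rw [← hunion]
    exact Set.iUnion_subset fun n => (hFC n).trans (Set.subset_iUnion (fun k => (Cf k).1) n)
  · exact fun n => ⟨n, hFC n⟩
  · intro k
    obtain ⟨n, hn⟩ := (Cf k).2
    exact ⟨n, hn.prop.1⟩
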